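/- Let ε > 0 and suppose R − I(X;Y) − ε = (c − r)(log₂ n)/n for constants c > r > 0. Then over the random i.i.d. codebook 𝒞 of size 2^{nR}, for every fixed y^n ∈ 𝒴^n the probability that D_{𝒞,1}(y^n) ≥ 1 + 1/√n is at most e^{−(1/(3n)) 2^{n(R − I(X;Y) − ε)}} = e^{−(1/3) n^{c − r − 1}}. -/

import Mathlib

open Finset Real
open scoped BigOperators Classical

noncomputable section SoftCovering

/-- `p` is a probability mass function on the finite type `α`. -/
def IsPMF {α : Type*} [Fintype α] (p : α → ℝ) : Prop :=
  (∀ a, 0 ≤ p a) ∧ ∑ a, p a = 1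

variable {𝒳 𝒴 : Type*} [Fintype 𝒳] [Fintype 𝒴]

/-- The output distribution `Q_Y` on `𝒴` induced by the input distribution `Q_X`
and the channel `Q_{Y|X}`. -/
def outDist (QX : 𝒳 → ℝ) (QYX : 𝒳 → 𝒴 → ℝ) (y : 𝒴) : ℝ := ∑ x, QX x * QYX x y

/-- The `n`-fold i.i.d. product of a distribution `p`. -/
def prodDist {α : Type*} [Fintype α] (p : α → ℝ) (n : ℕ) (xs : Fin n → α) : ℝ :=
  ∏ i, p (xs i)

/-- The `n`-fold memoryless channel: `Q_{Y^n|X^n = xs}(ys)`. -/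
def chanProd (QYX : 𝒳 → 𝒴 → ℝ) (n : ℕ) (xs : Fin n → 𝒳) (ys : Fin n → 𝒴) : ℝ :=
  ∏ i, QYX (xs i) (ys i)

/-- The information density `ı_{X;Y}(x;y) = log₂ (Q_{Y|X}(y|x) / Q_Y(y))`, in bits. -/
def infoDensity (QX : 𝒳 → ℝ) (QYX : 𝒳 → 𝒴 → ℝ) (x : 𝒳) (y : 𝒴) : ℝ :=
  Real.logb 2 (QYX x y / outDist QX QYX y)

/-- The mutual information `I(X;Y)` of `(X,Y) ~ Q_X Q_{Y|X}`, in bits. -/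
def mutualInfo (QX : 𝒳 → ℝ) (QYX : 𝒳 → 𝒴 → ℝ) : ℝ :=
  ∑ x, ∑ y, QX x * QYX x y * infoDensity QX QYX x y

/-- The variance `V` of the information density under `(X,Y) ~ Q_X Q_{Y|X}`. -/
def infoVar (QX : 𝒳 → ℝ) (QYX : 𝒳 → 𝒴 → ℝ) : ℝ :=
  ∑ x, ∑ y, QX x * QYX x y * (infoDensity QX QYX x y - mutualInfo QX QYX) ^ 2

/-- The centered third absolute moment `ρ` of the information density. -/
def infoThird (QX : 𝒳 → ℝ) (QYX : 𝒳 → 𝒴 → ℝ) : ℝ :=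
  ∑ x, ∑ y, QX x * QYX x y * |infoDensity QX QYX x y - mutualInfo QX QYX| ^ 3

/-- The Rényi divergence of order `a` between `Q_{X,Y} = Q_X Q_{Y|X}` and the product
of its marginals `Q_X Q_Y`, in bits. -/
def renyiDiv (QX : 𝒳 → ℝ) (QYX : 𝒳 → 𝒴 → ℝ) (a : ℝ) : ℝ :=
  (a - 1)⁻¹ * Real.logb 2 (∑ x, ∑ y,
    (QX x * QYX x y) ^ a * (QX x * outDist QX QYX y) ^ (1 - a))

/-- Membership in the jointly typical set
`𝒜_ε = {(x^n,y^n) : (1/n) log₂ (Q_{Y^n|X^n=x^n}(y^n)/Q_{Y^n}(y^n)) ≤ I(X;Y) + ε}`. -/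
def JTypical (QX : 𝒳 → ℝ) (QYX : 𝒳 → 𝒴 → ℝ) (n : ℕ) (ε : ℝ)
    (xs : Fin n → 𝒳) (ys : Fin n → 𝒴) : Prop :=
  (n : ℝ)⁻¹ * Real.logb 2 (chanProd QYX n xs ys / prodDist (outDist QX QYX) n ys)
    ≤ mutualInfo QX QYX + ε

/-- The probability that `(X^n, Y^n) ~ Q_{X^n} Q_{Y^n|X^n}` is outside `𝒜_ε`. -/
def atypProb (QX : 𝒳 → ℝ) (QYX : 𝒳 → 𝒴 → ℝ) (n : ℕ) (ε : ℝ) : ℝ :=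
  ∑ xs : Fin n → 𝒳, ∑ ys : Fin n → 𝒴,
    if ¬ JTypical QX QYX n ε xs ys then prodDist QX n xs * chanProd QYX n xs ys else 0

/-- The induced output distribution `P_{Y^n|C} = 2^{-nR} ∑_m Q_{Y^n|X^n = x^n(m)}`
of a codebook `C` of size `M = 2^{nR}` (so `2^{-nR} = 1/M`). -/
def inducedDist (QYX : 𝒳 → 𝒴 → ℝ) (n M : ℕ) (C : Fin M → Fin n → 𝒳)
    (ys : Fin n → 𝒴) : ℝ :=
  (M : ℝ)⁻¹ * ∑ m, chanProd QYX n (C m) ys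

/-- The typical part `P_{C,1}(y^n) = 2^{-nR} ∑_m Q_{Y^n|X^n=x^n(m)}(y^n) 1{(x^n(m),y^n) ∈ 𝒜_ε}`. -/
def Ptyp (QX : 𝒳 → ℝ) (QYX : 𝒳 → 𝒴 → ℝ) (n M : ℕ) (ε : ℝ)
    (C : Fin M → Fin n → 𝒳) (ys : Fin n → 𝒴) : ℝ :=
  (M : ℝ)⁻¹ * ∑ m, if JTypical QX QYX n ε (C m) ys then chanProd QYX n (C m) ys else 0

/-- The atypical part `P_{C,2}(y^n) = 2^{-nR} ∑_m Q_{Y^n|X^n=x^n(m)}(y^n) 1{(x^n(m),y^n) ∉ 𝒜_ε}`. -/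
def Patyp (QX : 𝒳 → ℝ) (QYX : 𝒳 → 𝒴 → ℝ) (n M : ℕ) (ε : ℝ)
    (C : Fin M → Fin n → 𝒳) (ys : Fin n → 𝒴) : ℝ :=
  (M : ℝ)⁻¹ * ∑ m, if ¬ JTypical QX QYX n ε (C m) ys then chanProd QYX n (C m) ys else 0

/-- The density `D_{C,1}(y^n) = P_{C,1}(y^n)/Q_{Y^n}(y^n)
= 2^{-nR} ∑_m (Q_{Y^n|X^n=x^n(m)}(y^n)/Q_{Y^n}(y^n)) 1{(x^n(m),y^n) ∈ 𝒜_ε}`. -/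
def Dtyp (QX : 𝒳 → ℝ) (QYX : 𝒳 → 𝒴 → ℝ) (n M : ℕ) (ε : ℝ)
    (C : Fin M → Fin n → 𝒳) (ys : Fin n → 𝒴) : ℝ :=
  (M : ℝ)⁻¹ * ∑ m, if JTypical QX QYX n ε (C m) ys then
    chanProd QYX n (C m) ys / prodDist (outDist QX QYX) n ys else 0

/-- Total variation distance `(1/2) ∑_y |P y - Q y|` on a finite type. -/
def tvDist {β : Type*} [Fintype β] (P Q : β → ℝ) : ℝ := (1 / 2) * ∑ y, |P y - Q y|

/-- Probability of an event `E` over the random codebook of `M` codewords drawn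
i.i.d. from `Q_{X^n}`. -/
def cbProb (QX : 𝒳 → ℝ) (n M : ℕ) (E : (Fin M → Fin n → 𝒳) → Prop) : ℝ :=
  ∑ C : Fin M → Fin n → 𝒳, if E C then ∏ m, prodDist QX n (C m) else 0

/-- `𝒬(x)`: one minus the standard normal cumulative distribution function. -/
def gaussQ (x : ℝ) : ℝ :=
  (Real.sqrt (2 * Real.pi))⁻¹ * ∫ t in Set.Ioi x, Real.exp (-(t ^ 2 / 2))

/-- `𝒬⁻¹`, the inverse of `𝒬`. -/
def gaussQInv : ℝ → ℝ := Function.invFun gaussQ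


/-- exp s ≤ 1 + s + s²/2 + (2/9)s³ on [0,1]. -/
lemma exp_cubic_bound {s : ℝ} (h0 : 0 ≤ s) (h1 : s ≤ 1) :
    Real.exp s ≤ 1 + s + s ^ 2 / 2 + s ^ 3 * (2 / 9) := by
  have h := Real.exp_bound' h0 h1 (n := 3) (by norm_num)
  norm_num [Finset.sum_range_succ, Nat.factorial] at h
  linarith

/-- Generic finite-alphabet multiplicative Chernoff bound. -/
lemma chernoff_core {α : Type*} [Fintype α] (P L : α → ℝ)
    (hP0 : ∀ x, 0 ≤ P x) (hP1 : ∑ x, P x = 1)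
    (hL0 : ∀ x, 0 ≤ L x) {B : ℝ} (hB : 0 < B) (hLB : ∀ x, L x ≤ B)
    (hmean : ∑ x, P x * L x ≤ 1)
    {M : ℕ} {δ : ℝ} (hδ0 : 0 < δ) (hδ1 : δ ≤ 1) :
    (∑ C : Fin M → α, if (M : ℝ) * (1 + δ) ≤ ∑ m, L (C m) then ∏ m, P (C m) else 0)
      ≤ Real.exp (-(δ ^ 2 / 3) * ((M : ℝ) / B)) := by
  classical
  set s : ℝ := (7 / 10) * δ with hs_def
  have hs0 : 0 ≤ s := by positivity
  have hs1 : s ≤ 1 := by nlinarith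
  set t : ℝ := s / B with ht_def
  have ht0 : 0 ≤ t := div_nonneg hs0 hB.le
  have hEs1 : 1 ≤ Real.exp s := Real.one_le_exp hs0
  -- pointwise chord bound
  have hconv : ∀ x, Real.exp (t * L x) ≤ 1 + (L x / B) * (Real.exp s - 1) := by
    intro x
    have hu0 : 0 ≤ L x / B := div_nonneg (hL0 x) hB.le
    have hu1 : L x / B ≤ 1 := (div_le_one hB).2 (hLB x)
    have hc := convexOn_exp.2 (Set.mem_univ (0 : ℝ)) (Set.mem_univ s)
      (by linarith : (0:ℝ) ≤ 1 - L x / B) hu0 (by ring)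
    have harg : (1 - L x / B) • (0 : ℝ) + (L x / B) • s = t * L x := by
      rw [ht_def, smul_eq_mul, smul_eq_mul, mul_zero, zero_add, div_mul_eq_mul_div, div_mul_eq_mul_div, mul_comm s]
    rw [harg, smul_eq_mul, smul_eq_mul, Real.exp_zero] at hc
    calc Real.exp (t * L x) ≤ (1 - L x / B) * 1 + (L x / B) * Real.exp s := hc
      _ = 1 + (L x / B) * (Real.exp s - 1) := by ring
  -- MGF bound
  have hmgf : ∑ x, P x * Real.exp (t * L x) ≤ Real.exp ((Real.exp s - 1) / B) := by
    have step1 : ∑ x, P x * Real.exp (t * L x)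
        ≤ ∑ x, (P x + (P x * L x) * ((Real.exp s - 1) / B)) := by
      apply Finset.sum_le_sum
      intro x _
      have := mul_le_mul_of_nonneg_left (hconv x) (hP0 x)
      calc P x * Real.exp (t * L x) ≤ P x * (1 + (L x / B) * (Real.exp s - 1)) := this
        _ = P x + (P x * L x) * ((Real.exp s - 1) / B) := by field_simp
    have step2 : ∑ x, (P x + (P x * L x) * ((Real.exp s - 1) / B))
        = 1 + (∑ x, P x * L x) * ((Real.exp s - 1) / B) := by
      rw [Finset.sum_add_distrib, hP1, ← Finset.sum_mul]
    have step3 : (∑ x, P x * L x) * ((Real.exp s - 1) / B) ≤ (Real.exp s - 1) / B := by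
      have h1 : 0 ≤ (Real.exp s - 1) / B := div_nonneg (by linarith) hB.le
      nlinarith
    have step4 : 1 + (Real.exp s - 1) / B ≤ Real.exp ((Real.exp s - 1) / B) := by
      have := Real.add_one_le_exp ((Real.exp s - 1) / B); linarith
    linarith [step1, step2 ▸ step1]
  have hsumnn : 0 ≤ ∑ x, P x * Real.exp (t * L x) :=
    Finset.sum_nonneg fun x _ => mul_nonneg (hP0 x) (Real.exp_pos _).le
  -- exponential Markov step
  have hprod : ∑ C : Fin M → α, ∏ m, (P (C m) * Real.exp (t * L (C m)))
      = (∑ x, P x * Real.exp (t * L x)) ^ M := by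
    rw [← Fintype.prod_sum fun (_ : Fin M) (x : α) => P x * Real.exp (t * L x)]
    simp
  have key : (∑ C : Fin M → α, if (M : ℝ) * (1 + δ) ≤ ∑ m, L (C m) then ∏ m, P (C m) else 0)
      ≤ Real.exp (-(t * ((M : ℝ) * (1 + δ)))) * (∑ x, P x * Real.exp (t * L x)) ^ M := by
    rw [← hprod, Finset.mul_sum]
    apply Finset.sum_le_sum
    intro C _
    have hPp : 0 ≤ ∏ m, P (C m) := Finset.prod_nonneg fun m _ => hP0 _
    by_cases h : (M : ℝ) * (1 + δ) ≤ ∑ m, L (C m)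
    · rw [if_pos h]
      have hsplit : ∏ m, (P (C m) * Real.exp (t * L (C m)))
          = (∏ m, P (C m)) * Real.exp (t * ∑ m, L (C m)) := by
        rw [Finset.prod_mul_distrib, Finset.mul_sum, Real.exp_sum]
      rw [hsplit]
      have h1 : (1 : ℝ) ≤ Real.exp (-(t * ((M : ℝ) * (1 + δ)))) * Real.exp (t * ∑ m, L (C m)) := by
        rw [← Real.exp_add]
        apply Real.one_le_exp
        have := mul_le_mul_of_nonneg_left h ht0
        linarith
      calc ∏ m, P (C m) = (∏ m, P (C m)) * 1 := by ring
        _ ≤ (∏ m, P (C m)) * (Real.exp (-(t * ((M : ℝ) * (1 + δ)))) * Real.exp (t * ∑ m, L (C m))) :=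
            mul_le_mul_of_nonneg_left h1 hPp
        _ = Real.exp (-(t * ((M : ℝ) * (1 + δ)))) * ((∏ m, P (C m)) * Real.exp (t * ∑ m, L (C m))) := by ring
    · rw [if_neg h]
      exact mul_nonneg (Real.exp_pos _).le (Finset.prod_nonneg fun m _ => mul_nonneg (hP0 _) (Real.exp_pos _).le)
  have hpow : (∑ x, P x * Real.exp (t * L x)) ^ M
      ≤ Real.exp ((M : ℝ) * ((Real.exp s - 1) / B)) := by
    calc (∑ x, P x * Real.exp (t * L x)) ^ M
        ≤ (Real.exp ((Real.exp s - 1) / B)) ^ M := pow_le_pow_left₀ hsumnn hmgf M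
      _ = Real.exp ((M : ℝ) * ((Real.exp s - 1) / B)) := by
          rw [← Real.exp_nat_mul]
  have hexp : -(t * ((M : ℝ) * (1 + δ))) + (M : ℝ) * ((Real.exp s - 1) / B)
      ≤ -(δ ^ 2 / 3) * ((M : ℝ) / B) := by
    have hEub : Real.exp s ≤ 1 + s + s ^ 2 / 2 + s ^ 3 * (2 / 9) := exp_cubic_bound hs0 hs1
    have hscal : Real.exp s - 1 - s * (1 + δ) ≤ -(δ ^ 2 / 3) := by
      rw [hs_def] at hEub ⊢
      nlinarith [sq_nonneg δ, pow_le_pow_left₀ hδ0.le hδ1 3]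
    have hMnn : (0 : ℝ) ≤ (M : ℝ) / B := div_nonneg (Nat.cast_nonneg _) hB.le
    have : -(t * ((M : ℝ) * (1 + δ))) + (M : ℝ) * ((Real.exp s - 1) / B)
        = ((M : ℝ) / B) * (Real.exp s - 1 - s * (1 + δ)) := by
      rw [ht_def]; field_simp; ring
    rw [this]
    calc ((M : ℝ) / B) * (Real.exp s - 1 - s * (1 + δ))
        ≤ ((M : ℝ) / B) * (-(δ ^ 2 / 3)) := mul_le_mul_of_nonneg_left hscal hMnn
      _ = -(δ ^ 2 / 3) * ((M : ℝ) / B) := by ring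
  calc (∑ C : Fin M → α, if (M : ℝ) * (1 + δ) ≤ ∑ m, L (C m) then ∏ m, P (C m) else 0)
      ≤ Real.exp (-(t * ((M : ℝ) * (1 + δ)))) * (∑ x, P x * Real.exp (t * L x)) ^ M := key
    _ ≤ Real.exp (-(t * ((M : ℝ) * (1 + δ)))) * Real.exp ((M : ℝ) * ((Real.exp s - 1) / B)) :=
        mul_le_mul_of_nonneg_left hpow (Real.exp_pos _).le
    _ = Real.exp (-(t * ((M : ℝ) * (1 + δ))) + (M : ℝ) * ((Real.exp s - 1) / B)) := by
        rw [← Real.exp_add]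
    _ ≤ Real.exp (-(δ ^ 2 / 3) * ((M : ℝ) / B)) := Real.exp_le_exp.2 hexp


/-- **Chernoff bound for the typical density, second-order version (Eq. (41)-(43)).**
If `R − I(X;Y) − ε = (c − r) log₂ n / n` with `c > r > 0`, then for every fixed `y^n`
the probability over the random codebook `𝒞` of size `M = 2^{nR}` that
`D_{𝒞,1}(y^n) ≥ 1 + 1/√n` is at most
`e^{−(1/(3n)) 2^{n(R−I(X;Y)−ε)}} = e^{−(1/3) n^{c−r−1}}`. -/
theorem typical_density_chernoff_second_order
    {𝒳 𝒴 : Type*} [Fintype 𝒳] [Fintype 𝒴]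
    (QX : 𝒳 → ℝ) (QYX : 𝒳 → 𝒴 → ℝ) (hQX : IsPMF QX) (hQYX : ∀ x, IsPMF (QYX x))
    (R : ℝ) (n M : ℕ) (hn : 0 < n) (hM : (M : ℝ) = 2 ^ ((n : ℝ) * R))
    (ε : ℝ) (hε : 0 < ε) (c r : ℝ) (hr : 0 < r) (hrc : r < c)
    (hgap : R - mutualInfo QX QYX - ε = (c - r) * Real.logb 2 ↑n / ↑n)
    (ys : Fin n → 𝒴) :
    cbProb QX n M (fun C => 1 + (Real.sqrt ↑n)⁻¹ ≤ Dtyp QX QYX n M ε C ys)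
        ≤ Real.exp (-(1 / (3 * ↑n)) * 2 ^ ((n : ℝ) * (R - mutualInfo QX QYX - ε))) ∧
      Real.exp (-(1 / (3 * ↑n)) * 2 ^ ((n : ℝ) * (R - mutualInfo QX QYX - ε)))
        = Real.exp (-(1 / 3) * (n : ℝ) ^ (c - r - 1)) := by
  classical
  have hn0 : (0 : ℝ) < n := by exact_mod_cast hn
  have hn1 : (1 : ℝ) ≤ n := by exact_mod_cast hn
  set I := mutualInfo QX QYX with hIdef
  have hsqpos : 0 < Real.sqrt n := Real.sqrt_pos.2 hn0
  set δ : ℝ := (Real.sqrt (n : ℝ))⁻¹ with hδdef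
  have hδ0 : 0 < δ := inv_pos.2 hsqpos
  have hδ1 : δ ≤ 1 := by
    rw [hδdef]
    have h1 : (1 : ℝ) ≤ Real.sqrt n := by
      rw [show (1:ℝ) = Real.sqrt 1 by simp]
      exact Real.sqrt_le_sqrt hn1
    exact inv_le_one_of_one_le₀ h1
  have hδsq : δ ^ 2 = (n : ℝ)⁻¹ := by
    rw [hδdef, inv_pow, Real.sq_sqrt hn0.le]
  set B : ℝ := (2 : ℝ) ^ ((n : ℝ) * (I + ε)) with hBdef
  have hB : 0 < B := Real.rpow_pos_of_pos two_pos _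
  have hMpos : (0 : ℝ) < (M : ℝ) := by rw [hM]; exact Real.rpow_pos_of_pos two_pos _
  set P : (Fin n → 𝒳) → ℝ := prodDist QX n with hPdef
  set L : (Fin n → 𝒳) → ℝ := fun xs => if JTypical QX QYX n ε xs ys then
    chanProd QYX n xs ys / prodDist (outDist QX QYX) n ys else 0 with hLdef
  have hP0 : ∀ xs, 0 ≤ P xs := fun xs => Finset.prod_nonneg fun i _ => hQX.1 _
  have hP1 : ∑ xs, P xs = 1 := by
    rw [hPdef]
    unfold prodDist
    rw [← Fintype.prod_sum fun (_ : Fin n) (x : 𝒳) => QX x]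
    simp [hQX.2]
  have hchan0 : ∀ xs, 0 ≤ chanProd QYX n xs ys :=
    fun xs => Finset.prod_nonneg fun i _ => (hQYX _).1 _
  have hQy0 : 0 ≤ prodDist (outDist QX QYX) n ys :=
    Finset.prod_nonneg fun i _ => Finset.sum_nonneg fun x _ =>
      mul_nonneg (hQX.1 x) ((hQYX x).1 _)
  have hL0 : ∀ xs, 0 ≤ L xs := by
    intro xs
    rw [hLdef]
    dsimp only
    split
    · exact div_nonneg (hchan0 xs) hQy0
    · exact le_refl 0
  have hLB : ∀ xs, L xs ≤ B := by
    intro xs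
    rw [hLdef]
    dsimp only
    split
    case isTrue h =>
      set ratio := chanProd QYX n xs ys / prodDist (outDist QX QYX) n ys with hratio
      have hr0 : 0 ≤ ratio := div_nonneg (hchan0 xs) hQy0
      rcases hr0.eq_or_lt with h0 | hpos
      · rw [← h0]; exact hB.le
      · have hlog : Real.logb 2 ratio ≤ (n : ℝ) * (I + ε) := by
          have := h
          unfold JTypical at this
          rw [← hIdef] at this
          calc Real.logb 2 ratio = (n : ℝ) * ((n : ℝ)⁻¹ * Real.logb 2 ratio) := by
                field_simp
            _ ≤ (n : ℝ) * (I + ε) := mul_le_mul_of_nonneg_left this hn0.le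
        calc ratio = (2 : ℝ) ^ Real.logb 2 ratio :=
              (Real.rpow_logb two_pos (by norm_num) hpos).symm
          _ ≤ (2 : ℝ) ^ ((n : ℝ) * (I + ε)) :=
              Real.rpow_le_rpow_of_exponent_le one_le_two hlog
    case isFalse h => exact hB.le
  have hmean : ∑ xs, P xs * L xs ≤ 1 := by
    have hkey : ∑ xs, P xs * chanProd QYX n xs ys = prodDist (outDist QX QYX) n ys := by
      rw [hPdef]
      unfold prodDist chanProd outDist
      simp only [← Finset.prod_mul_distrib]
      rw [← Fintype.prod_sum fun (i : Fin n) (x : 𝒳) => QX x * QYX x (ys i)]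
    rcases hQy0.eq_or_lt with h0 | hpos
    · have : ∀ xs, L xs = 0 := by
        intro xs
        rw [hLdef]
        dsimp only
        split
        · rw [← h0, div_zero]
        · rfl
      simp [this]
    · calc ∑ xs, P xs * L xs
          ≤ ∑ xs, P xs * (chanProd QYX n xs ys / prodDist (outDist QX QYX) n ys) := by
            apply Finset.sum_le_sum
            intro xs _
            apply mul_le_mul_of_nonneg_left _ (hP0 xs)
            rw [hLdef]
            dsimp only
            split
            · exact le_refl _
            · exact div_nonneg (hchan0 xs) hQy0
        _ = (∑ xs, P xs * chanProd QYX n xs ys) / prodDist (outDist QX QYX) n ys := by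
            rw [Finset.sum_div]
            exact Finset.sum_congr rfl fun xs _ => (mul_div_assoc _ _ _).symm
        _ = 1 := by rw [hkey, div_self hpos.ne']
  -- rewrite the event
  have hevent : ∀ C : Fin M → Fin n → 𝒳,
      (1 + (Real.sqrt ↑n)⁻¹ ≤ Dtyp QX QYX n M ε C ys) ↔ ((M : ℝ) * (1 + δ) ≤ ∑ m, L (C m)) := by
    intro C
    have hD : Dtyp QX QYX n M ε C ys = (M : ℝ)⁻¹ * ∑ m, L (C m) := by
      unfold Dtyp
      rw [hLdef]
    rw [hD]
    exact le_inv_mul_iff₀ hMpos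
  have hmain : cbProb QX n M (fun C => 1 + (Real.sqrt ↑n)⁻¹ ≤ Dtyp QX QYX n M ε C ys)
      ≤ Real.exp (-(δ ^ 2 / 3) * ((M : ℝ) / B)) := by
    unfold cbProb
    calc (∑ C : Fin M → Fin n → 𝒳,
          if 1 + (Real.sqrt ↑n)⁻¹ ≤ Dtyp QX QYX n M ε C ys then ∏ m, prodDist QX n (C m) else 0)
        = ∑ C : Fin M → Fin n → 𝒳,
          if (M : ℝ) * (1 + δ) ≤ ∑ m, L (C m) then ∏ m, P (C m) else 0 := by
          exact Finset.sum_congr rfl fun C _ => by rw [if_congr (hevent C) rfl rfl]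
      _ ≤ Real.exp (-(δ ^ 2 / 3) * ((M : ℝ) / B)) :=
          chernoff_core P L hP0 hP1 hL0 hB hLB hmean hδ0 hδ1
  have hMB : (M : ℝ) / B = (2 : ℝ) ^ ((n : ℝ) * (R - I - ε)) := by
    rw [hM, hBdef, ← Real.rpow_sub two_pos]
    congr 1
    ring
  have hexpeq : -(δ ^ 2 / 3) * ((M : ℝ) / B) = -(1 / (3 * (n : ℝ))) * 2 ^ ((n : ℝ) * (R - I - ε)) := by
    rw [hMB, hδsq]
    field_simp
  constructor
  · rw [← hexpeq]
    exact hmain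
  · congr 1
    have h1 : (n : ℝ) * (R - I - ε) = (c - r) * Real.logb 2 n := by
      rw [hgap]; field_simp
    have h2 : (2 : ℝ) ^ ((n : ℝ) * (R - I - ε)) = (n : ℝ) ^ (c - r) := by
      rw [h1, mul_comm, Real.rpow_mul (by norm_num : (0:ℝ) ≤ 2),
        Real.rpow_logb two_pos (by norm_num) hn0]
    rw [h2, Real.rpow_sub hn0 (c - r) 1, Real.rpow_one]
    have hne : (n : ℝ) ≠ 0 := hn0.ne'
    field_simp
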